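/- A finite-dimensional ℤ₂-graded algebra over ℂ is semisimple as a graded algebra (every graded two-sided ideal admits a graded complementary ideal) if and only if the underlying ungraded algebra is semisimple. -/

import Mathlib

/-- A two-sided ideal `I` of a `ℤ₂`-graded algebra is graded if every element of `I`
is the sum of an even element of `I` and an odd element of `I`. -/
def IsGradedIdeal {A : Type*} [Ring A] [Algebra ℂ A] (even odd : Submodule ℂ A)
    (I : TwoSidedIdeal A) : Prop :=
  ∀ x ∈ I, ∃ a ∈ even, ∃ b ∈ odd, a ∈ I ∧ b ∈ I ∧ x = a + b

section Helpers

variable {A : Type*} [Ring A] [Algebra ℂ A] {A₀ A₁ : Submodule ℂ A}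

lemma grading_decomp (hcompl : IsCompl A₀ A₁) (x : A) :
    ∃ a ∈ A₀, ∃ b ∈ A₁, x = a + b := by
  have hx : x ∈ A₀ ⊔ A₁ := by rw [hcompl.sup_eq_top]; trivial
  obtain ⟨a, ha, b, hb, h⟩ := Submodule.mem_sup.mp hx
  exact ⟨a, ha, b, hb, h.symm⟩

lemma grading_uniq (hcompl : IsCompl A₀ A₁) {a b : A} (ha : a ∈ A₀) (hb : b ∈ A₁)
    (h : a + b = 0) : a = 0 ∧ b = 0 := by
  have hab : a = -b := eq_neg_of_add_eq_zero_left h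
  have hmem : a ∈ A₀ ⊓ A₁ := ⟨ha, hab ▸ A₁.neg_mem hb⟩
  rw [hcompl.inf_eq_bot] at hmem
  have ha0 : a = 0 := hmem
  exact ⟨ha0, by rwa [ha0, zero_add] at h⟩

lemma one_mem_even (hcompl : IsCompl A₀ A₁)
    (h00 : ∀ a ∈ A₀, ∀ b ∈ A₀, a * b ∈ A₀)
    (h01 : ∀ a ∈ A₀, ∀ b ∈ A₁, a * b ∈ A₁)
    (h10 : ∀ a ∈ A₁, ∀ b ∈ A₀, a * b ∈ A₁)
    (h11 : ∀ a ∈ A₁, ∀ b ∈ A₁, a * b ∈ A₀) : (1 : A) ∈ A₀ := by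
  obtain ⟨u, hu, v, hv, huv⟩ := grading_decomp hcompl 1
  have hkill : ∀ x : A, x * v = 0 := by
    intro x
    obtain ⟨a, ha, b, hb, hxab⟩ := grading_decomp hcompl x
    have hav : a * v = 0 := by
      have h0 : (a * u - a) + a * v = 0 := by
        have : a * (u + v) = a := by rw [← huv, mul_one]
        rw [mul_add] at this
        rw [sub_add_eq_add_sub, this, sub_self]
      exact (grading_uniq hcompl (A₀.sub_mem (h00 a ha u hu) ha) (h01 a ha v hv) h0).2
    have hbv : b * v = 0 := by
      have h0 : b * v + (b * u - b) = 0 := by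
        have : b * (u + v) = b := by rw [← huv, mul_one]
        rw [mul_add] at this
        rw [← add_sub_assoc, add_comm (b * v) (b * u), this, sub_self]
      exact (grading_uniq hcompl (h11 b hb v hv) (A₁.sub_mem (h10 b hb u hu) hb) h0).1
    rw [hxab, add_mul, hav, hbv, add_zero]
  have hv0 : v = 0 := by
    have := hkill 1
    rwa [one_mul] at this
  rw [huv, hv0, add_zero]
  exact hu

/-- The grading involution `a + b ↦ a - b`. -/
noncomputable def gsigma (A₀ A₁ : Submodule ℂ A) (hcompl : IsCompl A₀ A₁) : A →ₗ[ℂ] A :=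
  (2 : ℂ) • (A₀.subtype ∘ₗ A₀.projectionOnto A₁ hcompl) - LinearMap.id

lemma gsigma_spec (hcompl : IsCompl A₀ A₁) {x a b : A} (ha : a ∈ A₀) (hb : b ∈ A₁)
    (hx : x = a + b) : gsigma A₀ A₁ hcompl x = a - b := by
  subst hx
  have h1 : A₀.projectionOnto A₁ hcompl (a + b) = ⟨a, ha⟩ := by
    rw [map_add, Submodule.projectionOnto_apply_of_mem_right hcompl hb,
      add_zero]
    exact Submodule.projectionOnto_apply_left hcompl ⟨a, ha⟩
  simp only [gsigma, LinearMap.sub_apply, LinearMap.smul_apply, LinearMap.comp_apply,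
    LinearMap.id_apply, h1, Submodule.coe_subtype]
  rw [two_smul]
  abel

lemma gsigma_mul (hcompl : IsCompl A₀ A₁)
    (h00 : ∀ a ∈ A₀, ∀ b ∈ A₀, a * b ∈ A₀)
    (h01 : ∀ a ∈ A₀, ∀ b ∈ A₁, a * b ∈ A₁)
    (h10 : ∀ a ∈ A₁, ∀ b ∈ A₀, a * b ∈ A₁)
    (h11 : ∀ a ∈ A₁, ∀ b ∈ A₁, a * b ∈ A₀) (x y : A) :
    gsigma A₀ A₁ hcompl (x * y) = gsigma A₀ A₁ hcompl x * gsigma A₀ A₁ hcompl y := by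
  obtain ⟨a, ha, b, hb, hx⟩ := grading_decomp hcompl x
  obtain ⟨c, hc, d, hd, hy⟩ := grading_decomp hcompl y
  have hxy : x * y = (a * c + b * d) + (a * d + b * c) := by
    rw [hx, hy]; noncomm_ring
  rw [gsigma_spec hcompl ha hb hx, gsigma_spec hcompl hc hd hy,
    gsigma_spec hcompl (A₀.add_mem (h00 a ha c hc) (h11 b hb d hd))
      (A₁.add_mem (h01 a ha d hd) (h10 b hb c hc)) hxy]
  noncomm_ring

lemma gsigma_invol (hcompl : IsCompl A₀ A₁) (x : A) :
    gsigma A₀ A₁ hcompl (gsigma A₀ A₁ hcompl x) = x := by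
  obtain ⟨a, ha, b, hb, hx⟩ := grading_decomp hcompl x
  rw [gsigma_spec hcompl ha hb hx,
    gsigma_spec hcompl ha (A₁.neg_mem hb) (sub_eq_add_neg a b), hx]
  abel

lemma gsigma_one (hcompl : IsCompl A₀ A₁)
    (h00 : ∀ a ∈ A₀, ∀ b ∈ A₀, a * b ∈ A₀)
    (h01 : ∀ a ∈ A₀, ∀ b ∈ A₁, a * b ∈ A₁)
    (h10 : ∀ a ∈ A₁, ∀ b ∈ A₀, a * b ∈ A₁)
    (h11 : ∀ a ∈ A₁, ∀ b ∈ A₁, a * b ∈ A₀) :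
    gsigma A₀ A₁ hcompl (1 : A) = 1 := by
  rw [gsigma_spec hcompl (one_mem_even hcompl h00 h01 h10 h11) A₁.zero_mem
    (add_zero (1 : A)).symm, sub_zero]

lemma jacobson_graded (hcompl : IsCompl A₀ A₁)
    (h00 : ∀ a ∈ A₀, ∀ b ∈ A₀, a * b ∈ A₀)
    (h01 : ∀ a ∈ A₀, ∀ b ∈ A₁, a * b ∈ A₁)
    (h10 : ∀ a ∈ A₁, ∀ b ∈ A₀, a * b ∈ A₁)
    (h11 : ∀ a ∈ A₁, ∀ b ∈ A₁, a * b ∈ A₀) :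
    IsGradedIdeal A₀ A₁ (TwoSidedIdeal.jacobson (⊥ : TwoSidedIdeal A)) := by
  set J := TwoSidedIdeal.jacobson (⊥ : TwoSidedIdeal A) with hJdef
  set σ := gsigma A₀ A₁ hcompl with hσdef
  have hsmul : ∀ (c : ℂ) (x : A), x ∈ J → c • x ∈ J := by
    intro c x hx
    rw [Algebra.smul_def]
    exact J.mul_mem_left _ _ hx
  have hσJ : ∀ x ∈ J, σ x ∈ J := by
    intro x hx
    rw [hJdef, TwoSidedIdeal.mem_jacobson_iff] at hx ⊢
    intro y
    obtain ⟨z, hz⟩ := hx (σ y)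
    rw [TwoSidedIdeal.mem_bot] at hz
    refine ⟨σ z, ?_⟩
    rw [TwoSidedIdeal.mem_bot]
    have hcalc : σ (z * σ y * x + z - 1) = σ z * y * σ x + σ z - 1 := by
      rw [map_sub, map_add, gsigma_mul hcompl h00 h01 h10 h11,
        gsigma_mul hcompl h00 h01 h10 h11, gsigma_invol hcompl,
        gsigma_one hcompl h00 h01 h10 h11]
    rw [← hcalc, hz, map_zero]
  intro x hx
  obtain ⟨a, ha, b, hb, hxab⟩ := grading_decomp hcompl x
  have hσx : σ x = a - b := gsigma_spec hcompl ha hb hxab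
  have haJ : a ∈ J := by
    have hmem : ((2 : ℂ)⁻¹) • (x + σ x) ∈ J := hsmul _ _ (J.add_mem hx (hσJ x hx))
    have : ((2 : ℂ)⁻¹) • (x + σ x) = a := by
      rw [hσx, hxab, show a + b + (a - b) = (2 : ℂ) • a by rw [two_smul]; abel,
        smul_smul]
      norm_num
    rwa [this] at hmem
  have hbJ : b ∈ J := by
    have hmem : ((2 : ℂ)⁻¹) • (x - σ x) ∈ J := hsmul _ _ (J.sub_mem hx (hσJ x hx))
    have : ((2 : ℂ)⁻¹) • (x - σ x) = b := by
      rw [hσx, hxab, show a + b - (a - b) = (2 : ℂ) • b by rw [two_smul]; abel,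
        smul_smul]
      norm_num
    rwa [this] at hmem
  exact ⟨a, ha, b, hb, haJ, hbJ, hxab⟩

lemma exists_right_unit {B : Type*} [Ring B] [IsSemisimpleRing B] (J : Ideal B) :
    ∃ e, e ∈ J ∧ ∀ x ∈ J, x * e = x := by
  obtain ⟨e, he, hspan⟩ := IsSemisimpleRing.ideal_eq_span_idempotent J
  refine ⟨e, ?_, ?_⟩
  · rw [hspan]; exact Ideal.subset_span rfl
  · intro x hx
    rw [hspan] at hx
    obtain ⟨a, rfl⟩ := Submodule.mem_span_singleton.mp hx
    show a • e * e = a • e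
    rw [smul_eq_mul, mul_assoc, he]

open LinearMap in
lemma semisimple_of_finite_inf_maximal {B : Type*} [Ring B] (s : Finset (Ideal B))
    (hmax : ∀ m ∈ s, Ideal.IsMaximal m) (hbot : s.inf id = ⊥) : IsSemisimpleRing B := by
  classical
  haveI : ∀ m : s, IsSimpleModule B (B ⧸ (m : Ideal B)) := fun m =>
    isSimpleModule_iff_isCoatom.mpr (Ideal.isMaximal_def.mp (hmax m m.2))
  let φ : B →ₗ[B] (∀ m : s, B ⧸ (m : Ideal B)) := LinearMap.pi fun m => (m : Ideal B).mkQ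
  have hker : LinearMap.ker φ = ⊥ := by
    rw [LinearMap.ker_pi]
    simp_rw [Submodule.ker_mkQ]
    rw [← hbot, Finset.inf_eq_iInf, iInf_subtype]
    rfl
  have hinj : Function.Injective φ := LinearMap.ker_eq_bot.mp hker
  haveI : IsSemisimpleModule B (∀ m : s, B ⧸ (m : Ideal B)) := by
    refine isSemisimpleModule_of_isSemisimpleModule_submodule'
      (p := fun m => range (LinearMap.single B _ m)) (fun m => ?_) ?_
    · exact .congr (LinearEquiv.ofInjective _ (Pi.single_injective (M := fun m : s => B ⧸ (m : Ideal B)) m)).symm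
    · simp_rw [range_eq_map, Submodule.iSup_map_single, Submodule.pi_top]
  exact IsSemisimpleModule.congr (M := LinearMap.range φ) (LinearEquiv.ofInjective φ hinj)

end Helpers

/-- A finite-dimensional `ℤ₂`-graded algebra over `ℂ` is semisimple
as a graded algebra — i.e. every graded two-sided ideal `I` admits a graded two-sided
ideal `I'` with `A = I ⊕ I'` — if and only if the underlying ungraded algebra is
semisimple. -/
theorem stmt5 {A : Type*} [Ring A] [Algebra ℂ A] [FiniteDimensional ℂ A]
    (A₀ A₁ : Submodule ℂ A)
    (hcompl : IsCompl A₀ A₁)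
    (h00 : ∀ a ∈ A₀, ∀ b ∈ A₀, a * b ∈ A₀)
    (h01 : ∀ a ∈ A₀, ∀ b ∈ A₁, a * b ∈ A₁)
    (h10 : ∀ a ∈ A₁, ∀ b ∈ A₀, a * b ∈ A₁)
    (h11 : ∀ a ∈ A₁, ∀ b ∈ A₁, a * b ∈ A₀) :
    (∀ I : TwoSidedIdeal A, IsGradedIdeal A₀ A₁ I →
      ∃ I' : TwoSidedIdeal A, IsGradedIdeal A₀ A₁ I' ∧
        (∀ x, x ∈ I → x ∈ I' → x = 0) ∧ (∀ x : A, ∃ a ∈ I, ∃ b ∈ I', x = a + b)) ↔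
    IsSemisimpleRing A := by
  constructor
  · -- graded semisimple → semisimple
    intro h
    classical
    set J := TwoSidedIdeal.jacobson (⊥ : TwoSidedIdeal A) with hJdef
    obtain ⟨I', hI'g, hdisj, hsum⟩ := h J (jacobson_graded hcompl h00 h01 h10 h11)
    obtain ⟨e, heJ, e', he', h1⟩ := hsum 1
    have hee' : e * e' = 0 :=
      hdisj _ (J.mul_mem_right e e' heJ) (I'.mul_mem_left e e' he')
    have hid : e * e = e := by
      have : e * (e + e') = e := by rw [← h1, mul_one]
      rwa [mul_add, hee', add_zero] at this
    have he0 : e = 0 := by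
      obtain ⟨z, hz⟩ := TwoSidedIdeal.mem_jacobson_iff.mp heJ (-1)
      rw [TwoSidedIdeal.mem_bot] at hz
      have h1' : z * (-1) * e + z = 1 := sub_eq_zero.mp hz
      calc e = 1 * e := (one_mul e).symm
        _ = (z * (-1) * e + z) * e := by rw [h1']
        _ = -(z * (e * e)) + z * e := by noncomm_ring
        _ = 0 := by rw [hid]; exact neg_add_cancel _
    have h1e : (1 : A) ∈ I' := by
      have : (1 : A) = e' := by rw [h1, he0, zero_add]
      rwa [this]
    have hJ0 : ∀ x ∈ J, x = 0 := by
      intro x hx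
      refine hdisj x hx ?_
      have := I'.mul_mem_left x 1 h1e
      rwa [mul_one] at this
    have hjac : Ideal.jacobson (⊥ : Ideal A) = ⊥ := by
      rw [eq_bot_iff]
      intro x hx
      have hx' : x ∈ (TwoSidedIdeal.asIdeal (⊥ : TwoSidedIdeal A)).jacobson :=
        Ideal.jacobson_mono bot_le hx
      rw [← TwoSidedIdeal.asIdeal_jacobson] at hx'
      have hx0 := hJ0 x (TwoSidedIdeal.mem_asIdeal.mp hx')
      rw [hx0]
      exact Submodule.zero_mem ⊥
    haveI : IsArtinian A A := isArtinian_of_tower ℂ inferInstance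
    obtain ⟨N, hNmem, hmin⟩ := IsArtinian.set_has_minimal
      {I : Ideal A | ∃ s : Finset (Ideal A), (∀ m ∈ s, m.IsMaximal) ∧ I = s.inf id}
      ⟨⊤, ∅, by simp, by simp⟩
    obtain ⟨s, hsmax, hNs⟩ := hNmem
    have hNle : ∀ m : Ideal A, m.IsMaximal → N ≤ m := by
      intro m hm
      have hmem : N ⊓ m ∈
          {I : Ideal A | ∃ s : Finset (Ideal A), (∀ m ∈ s, m.IsMaximal) ∧ I = s.inf id} := by
        refine ⟨insert m s, ?_, ?_⟩
        · intro m' hm'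
          rcases Finset.mem_insert.mp hm' with h' | h'
          · rw [h']; exact hm
          · exact hsmax m' h'
        · rw [Finset.inf_insert, ← hNs, id, inf_comm]
      have hnlt := hmin _ hmem
      have heq : N ⊓ m = N := by
        rcases lt_or_eq_of_le (inf_le_left : N ⊓ m ≤ N) with hlt | heq
        · exact absurd hlt hnlt
        · exact heq
      rw [← heq]; exact inf_le_right
    have hNbot : N = ⊥ := by
      rw [eq_bot_iff, ← hjac]
      exact le_sInf fun m hm => hNle m hm.2
    refine semisimple_of_finite_inf_maximal s hsmax ?_
    rw [← hNs]; exact hNbot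
  · -- semisimple → graded semisimple
    intro hss I hI
    obtain ⟨e, heI, he⟩ := exists_right_unit (TwoSidedIdeal.asIdeal I)
    rw [TwoSidedIdeal.mem_asIdeal] at heI
    have he' : ∀ x ∈ I, x * e = x := fun x hx =>
      he x (TwoSidedIdeal.mem_asIdeal.mpr hx)
    set I' : TwoSidedIdeal A := TwoSidedIdeal.mk' {x | ∀ y ∈ I, y * x = 0}
      (fun y _ => mul_zero y)
      (fun {x₁ x₂} hx₁ hx₂ z hz => by rw [mul_add, hx₁ z hz, hx₂ z hz, add_zero])
      (fun {x₁} hx₁ z hz => by rw [mul_neg, hx₁ z hz, neg_zero])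
      (fun {x₁ x₂} hx₂ z hz => by rw [← mul_assoc]; exact hx₂ _ (I.mul_mem_right z x₁ hz))
      (fun {x₁ x₂} hx₁ z hz => by rw [← mul_assoc, hx₁ z hz, zero_mul]) with hI'def
    have hmem' : ∀ x : A, x ∈ I' ↔ ∀ y ∈ I, y * x = 0 := fun x => by
      rw [hI'def, TwoSidedIdeal.mem_mk']; rfl
    refine ⟨I', ?_, ?_, ?_⟩
    · -- gradedness of the annihilator
      intro x hx
      rw [hmem'] at hx
      obtain ⟨a, ha, b, hb, hxab⟩ := grading_decomp hcompl x
      have key : ∀ y ∈ I, y * a = 0 ∧ y * b = 0 := by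
        intro y hy
        obtain ⟨c, hc, d, hd, hcI, hdI, hycd⟩ := hI y hy
        have hcx : c * a = 0 ∧ c * b = 0 := by
          have h0 : c * a + c * b = 0 := by rw [← mul_add, ← hxab]; exact hx c hcI
          exact grading_uniq hcompl (h00 c hc a ha) (h01 c hc b hb) h0
        have hdx : d * b = 0 ∧ d * a = 0 := by
          have h0' : d * a + d * b = 0 := by rw [← mul_add, ← hxab]; exact hx d hdI
          have h0 : d * b + d * a = 0 := by rw [add_comm]; exact h0'
          exact grading_uniq hcompl (h11 d hd b hb) (h10 d hd a ha) h0
        constructor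
        · rw [hycd, add_mul, hcx.1, hdx.2, add_zero]
        · rw [hycd, add_mul, hcx.2, hdx.1, add_zero]
      refine ⟨a, ha, b, hb, ?_, ?_, hxab⟩
      · rw [hmem']; exact fun y hy => (key y hy).1
      · rw [hmem']; exact fun y hy => (key y hy).2
    · -- trivial intersection
      intro x hxI hxI'
      obtain ⟨f, hf, hAll⟩ := exists_right_unit
        (TwoSidedIdeal.asIdeal I ⊓ TwoSidedIdeal.asIdeal I')
      rw [Submodule.mem_inf, TwoSidedIdeal.mem_asIdeal, TwoSidedIdeal.mem_asIdeal] at hf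
      have hff : f * f = 0 := (hmem' f).mp hf.2 f hf.1
      have hf0 : f = 0 := by
        have := hAll f (Submodule.mem_inf.mpr
          ⟨TwoSidedIdeal.mem_asIdeal.mpr hf.1, TwoSidedIdeal.mem_asIdeal.mpr hf.2⟩)
        rw [hff] at this
        exact this.symm
      have hx' := hAll x (Submodule.mem_inf.mpr
        ⟨TwoSidedIdeal.mem_asIdeal.mpr hxI, TwoSidedIdeal.mem_asIdeal.mpr hxI'⟩)
      rw [hf0, mul_zero] at hx'
      exact hx'.symm
    · -- sum is everything
      intro x
      refine ⟨x * e, I.mul_mem_left x e heI, x - x * e, ?_, by abel⟩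
      rw [hmem']
      intro y hy
      rw [mul_sub, ← mul_assoc, he' (y * x) (I.mul_mem_right y x hy), sub_self]
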